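/- Let n ≥ 4 and let a = Σ_{p≠q} a_{p,q} e_{p,q} ∈ E¹. Suppose there exist ordered pairs (p,q) and (r,s) with p ≠ q, r ≠ s, {p,q} ∩ {r,s} = ∅, a_{p,q} ≠ 0, and a_{r,s} ≠ 0. Then the map ψ_a : I² → E³, x ↦ a·x, is injective, where I² = I ∩ E²; consequently a does not lie in the first resonance variety R¹ of A = E/I. -/

import Mathlib

noncomputable section

open ExteriorAlgebra

/-- Index set for the generators `e_{p,q}`, `p ≠ q`, of the exterior algebra `E`. -/
abbrev RIdx (n : ℕ) := {pq : Fin n × Fin n // pq.1 ≠ pq.2}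

/-- The exterior algebra `E` on the vector space with basis `{e_{p,q} : p ≠ q}`. -/
abbrev Egen (k : Type) [Field k] (n : ℕ) := ExteriorAlgebra k (RIdx n →₀ k)

/-- The degree-one generator `e_{p,q}` of `E`. -/
def egen (k : Type) [Field k] {n : ℕ} (p q : Fin n) (h : p ≠ q) : Egen k n :=
  ExteriorAlgebra.ι k (Finsupp.single (⟨(p, q), h⟩ : RIdx n) (1 : k))

/-- The degree-one generator `e_{p,q}` indexed by an element of `RIdx n`. -/
def egen' (k : Type) [Field k] {n : ℕ} (x : RIdx n) : Egen k n :=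
  ExteriorAlgebra.ι k (Finsupp.single x (1 : k))

/-- The generators `η_{i,j} = e_{i,j} e_{j,i}` (for `i < j`) and
`τ^m_{i,j} = (e_{m,i} - e_{j,i})(e_{m,j} - e_{i,j})` (for `i < j`, `m ∉ {i,j}`)
of the ideal `I`. -/
def resGens (k : Type) [Field k] (n : ℕ) : Set (Egen k n) :=
  {x | ∃ (i j : Fin n) (hij : i < j),
      x = egen k i j hij.ne * egen k j i hij.ne'} ∪
  {x | ∃ (i j m : Fin n) (hij : i < j) (hmi : m ≠ i) (hmj : m ≠ j),
      x = (egen k m i hmi - egen k j i hij.ne') * (egen k m j hmj - egen k i j hij.ne)}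

/-- The two-sided ideal `I` of `E` generated by the `η`'s and `τ`'s. -/
def resIdeal (k : Type) [Field k] (n : ℕ) : TwoSidedIdeal (Egen k n) :=
  TwoSidedIdeal.span (resGens k n)

/-- The quotient algebra `A = E/I`, i.e. `H^*(PΣ_n; k)`. -/
abbrev resA (k : Type) [Field k] (n : ℕ) := (resIdeal k n).ringCon.Quotient

/-- The quotient map `π : E → A = E/I` as a `k`-algebra homomorphism. -/
def resπ (k : Type) [Field k] (n : ℕ) : Egen k n →ₐ[k] resA k n :=
  { (resIdeal k n).ringCon.mk' with commutes' := fun _ => rfl }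

/-- The degree-`m` graded piece `A^m` of `A = E/I`: the image of `E^m = ⋀^m` in `A`. -/
def resAmod (k : Type) [Field k] (n : ℕ) (m : ℕ) : Submodule k (resA k n) :=
  Submodule.map (resπ k n).toLinearMap (⋀[k]^m (RIdx n →₀ k))

/-- The first resonance variety `R¹ = {a ∈ A¹ : H¹(A, δ_a) ≠ 0}`:  `H¹(A,δ_a) ≠ 0` iff some
`x ∈ A¹ = ker(δ_a : A¹ → A²)`-element with `a·x = 0` is not in the image of `δ_a : A⁰ → A¹`. -/
def resR1 (k : Type) [Field k] (n : ℕ) : Set (resA k n) :=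
  {a | a ∈ resAmod k n 1 ∧
    ∃ x ∈ resAmod k n 1, a * x = 0 ∧
      x ∉ Submodule.map (LinearMap.mulLeft k a) (resAmod k n 0)}

/-- The subspace `C_{i,j} = span{e_{i,j}, e_{j,i}}` of `A¹`. -/
def resC2 (k : Type) [Field k] (n : ℕ) (i j : Fin n) (hij : i ≠ j) :
    Submodule k (resA k n) :=
  Submodule.span k {resπ k n (egen k i j hij), resπ k n (egen k j i hij.symm)}

/-- The subspace `C_{i,j,m} = span{e_{j,i} − e_{m,i}, e_{i,j} − e_{m,j}, e_{i,m} − e_{j,m}}`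
of `A¹`. -/
def resC3 (k : Type) [Field k] (n : ℕ) (i j m : Fin n)
    (hij : i ≠ j) (him : i ≠ m) (hjm : j ≠ m) : Submodule k (resA k n) :=
  Submodule.span k {resπ k n (egen k j i hij.symm - egen k m i him.symm),
                    resπ k n (egen k i j hij - egen k m j hjm.symm),
                    resπ k n (egen k i m him - egen k j m hjm)}

/-- The two-sided ideal `I`, viewed as a `k`-subspace of `E`. -/
def resIdealSub (k : Type) [Field k] (n : ℕ) : Submodule k (Egen k n) where
  carrier := resIdeal k n
  add_mem' := (resIdeal k n).add_mem
  zero_mem' := (resIdeal k n).zero_mem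
  smul_mem' c x hx := by
    have h := (resIdeal k n).mul_mem_left (algebraMap k (Egen k n) c) x hx
    simpa [Algebra.smul_def] using h

/-- The degree-two part `I² = I ∩ E²` of the ideal `I`, as a `k`-subspace of `E`. -/
def resI2 (k : Type) [Field k] (n : ℕ) : Submodule k (Egen k n) :=
  resIdealSub k n ⊓ ⋀[k]^2 (RIdx n →₀ k)

/-- The map `ψ_a : I² → E` (with image in `E³` when `a ∈ E¹`), `x ↦ a·x`. -/
def resPsi (k : Type) [Field k] (n : ℕ) (a : Egen k n) : resI2 k n →ₗ[k] Egen k n :=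
  (LinearMap.mulLeft k a).comp (resI2 k n).subtype

end

noncomputable section CaseOneAux
open ExteriorAlgebra
variable {k : Type} [Field k] {n : ℕ}

/-- Contraction by the dual basis vector of `E`. -/
def ctr (k : Type) [Field k] {n : ℕ} (E : RIdx n) : Egen k n →ₗ[k] Egen k n :=
  CliffordAlgebra.contractLeft (Q := (0 : QuadraticForm k (RIdx n →₀ k))) (Finsupp.lapply E)

lemma ctr_ι_mul (E : RIdx n) (u : RIdx n →₀ k) (b : Egen k n) :
    ctr k E (ι k u * b) = u E • b - ι k u * ctr k E b := by
  simpa [ctr] using CliffordAlgebra.contractLeft_ι_mul (Finsupp.lapply E) u b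

lemma ctr_ι (E : RIdx n) (u : RIdx n →₀ k) :
    ctr k E (ι k u) = algebraMap k (Egen k n) (u E) := by
  simpa [ctr] using CliffordAlgebra.contractLeft_ι
    (Q := (0 : QuadraticForm k (RIdx n →₀ k))) (Finsupp.lapply E) u

lemma ctr_ι_mul_ι (E : RIdx n) (u w : RIdx n →₀ k) :
    ctr k E (ι k u * ι k w) = u E • ι k w - w E • ι k u := by
  rw [ctr_ι_mul, ctr_ι, ← Algebra.commutes, ← Algebra.smul_def]

lemma ctr_ctr_ι_mul_ι (E F : RIdx n) (u w : RIdx n →₀ k) :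
    ctr k F (ctr k E (ι k u * ι k w)) =
      algebraMap k (Egen k n) (u E * w F - w E * u F) := by
  rw [ctr_ι_mul_ι, map_sub, map_smul, map_smul, ctr_ι, ctr_ι, map_sub, map_mul, map_mul,
    Algebra.smul_def, Algebra.smul_def]

/-- Scalar coefficient extraction in degree two. -/
def coef (k : Type) [Field k] {n : ℕ} (E F : RIdx n) : Egen k n →ₗ[k] k :=
  (ExteriorAlgebra.algebraMapInv).toLinearMap.comp ((ctr k F).comp (ctr k E))

lemma coef_ι_mul_ι (E F : RIdx n) (u w : RIdx n →₀ k) :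
    coef k E F (ι k u * ι k w) = u E * w F - w E * u F := by
  simp [coef, ctr_ctr_ι_mul_ι, ExteriorAlgebra.algebraMap_leftInverse (RIdx n →₀ k) _]

/-- Shorthand for elements of `RIdx n`. -/
def eidx {n : ℕ} (a b : Fin n) (h : a ≠ b) : RIdx n := ⟨(a, b), h⟩

lemma egen_eq (a b : Fin n) (h : a ≠ b) :
    egen k a b h = ι k (Finsupp.single (eidx a b h) (1 : k)) := rfl

/-- Every generator is a product `ι u * ι w`. -/
lemma resGens_eq_mul (g : Egen k n) (hg : g ∈ resGens k n) :
    ∃ (u w : RIdx n →₀ k), g = ι k u * ι k w := by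
  rcases hg with ⟨i, j, hij, rfl⟩ | ⟨i, j, m, hij, hmi, hmj, rfl⟩
  · exact ⟨_, _, rfl⟩
  · exact ⟨Finsupp.single (eidx m i hmi) 1 - Finsupp.single (eidx j i hij.ne') 1,
      Finsupp.single (eidx m j hmj) 1 - Finsupp.single (eidx i j hij.ne) 1,
      by rw [egen_eq, egen_eq, egen_eq, egen_eq, ← map_sub, ← map_sub]⟩

lemma single_eidx_apply (a b : Fin n) (h : a ≠ b) (E : RIdx n) :
    (Finsupp.single (eidx a b h) (1 : k)) E = if a = E.1.1 ∧ b = E.1.2 then 1 else 0 := by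
  rw [Finsupp.single_apply]
  congr 1
  simp [eidx, Subtype.ext_iff, Prod.ext_iff]

/-- coefficient of an `η`-generator -/
lemma coef_eta (i j : Fin n) (hij : i ≠ j) (E F : RIdx n) :
    coef k E F (egen k i j hij * egen k j i hij.symm) =
      (if i = E.1.1 ∧ j = E.1.2 then 1 else 0) * (if j = F.1.1 ∧ i = F.1.2 then 1 else 0)
      - (if j = E.1.1 ∧ i = E.1.2 then 1 else 0) * (if i = F.1.1 ∧ j = F.1.2 then 1 else 0) := by
  rw [egen_eq, egen_eq, coef_ι_mul_ι, single_eidx_apply, single_eidx_apply,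
    single_eidx_apply, single_eidx_apply]

/-- coefficient of a `τ`-generator -/
lemma coef_tau (i j m : Fin n) (hij : i ≠ j) (hmi : m ≠ i) (hmj : m ≠ j) (E F : RIdx n) :
    coef k E F ((egen k m i hmi - egen k j i hij.symm) * (egen k m j hmj - egen k i j hij)) =
      ((if m = E.1.1 ∧ i = E.1.2 then 1 else 0) - (if j = E.1.1 ∧ i = E.1.2 then 1 else 0)) *
      ((if m = F.1.1 ∧ j = F.1.2 then 1 else 0) - (if i = F.1.1 ∧ j = F.1.2 then 1 else 0)) -
      ((if m = F.1.1 ∧ i = F.1.2 then 1 else 0) - (if j = F.1.1 ∧ i = F.1.2 then 1 else 0)) *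
      ((if m = E.1.1 ∧ j = E.1.2 then 1 else 0) - (if i = E.1.1 ∧ j = E.1.2 then 1 else 0)) := by
  rw [egen_eq, egen_eq, egen_eq, egen_eq, ← map_sub, ← map_sub, coef_ι_mul_ι]
  simp only [Finsupp.sub_apply, single_eidx_apply]
  ring

set_option maxRecDepth 10000

lemma coef_eta' (i j e1 e2 f1 f2 : Fin n) (hij : i ≠ j) (he : e1 ≠ e2) (hf : f1 ≠ f2) :
    coef k (eidx e1 e2 (by exact he)) (eidx f1 f2 (by exact hf))
      (egen k i j hij * egen k j i hij.symm) =
      (if i = e1 ∧ j = e2 then 1 else 0) * (if j = f1 ∧ i = f2 then 1 else 0)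
      - (if j = e1 ∧ i = e2 then 1 else 0) * (if i = f1 ∧ j = f2 then 1 else 0) :=
  coef_eta i j hij _ _

lemma coef_tau' (i j m e1 e2 f1 f2 : Fin n) (hij : i ≠ j) (hmi : m ≠ i) (hmj : m ≠ j)
    (he : e1 ≠ e2) (hf : f1 ≠ f2) :
    coef k (eidx e1 e2 (by exact he)) (eidx f1 f2 (by exact hf))
      ((egen k m i hmi - egen k j i hij.symm) * (egen k m j hmj - egen k i j hij)) =
      ((if m = e1 ∧ i = e2 then 1 else 0) - (if j = e1 ∧ i = e2 then 1 else 0)) *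
      ((if m = f1 ∧ j = f2 then 1 else 0) - (if i = f1 ∧ j = f2 then 1 else 0)) -
      ((if m = f1 ∧ i = f2 then 1 else 0) - (if j = f1 ∧ i = f2 then 1 else 0)) *
      ((if m = e1 ∧ j = e2 then 1 else 0) - (if i = e1 ∧ j = e2 then 1 else 0)) :=
  coef_tau i j m hij hmi hmj _ _

set_option maxHeartbeats 2000000 in
lemma coef_gen_disjoint {g : Egen k n} (hg : g ∈ resGens k n) (e1 e2 f1 f2 : Fin n)
    (he : e1 ≠ e2) (hf : f1 ≠ f2)
    (h11 : e1 ≠ f1) (h12 : e1 ≠ f2) (h21 : e2 ≠ f1) (h22 : e2 ≠ f2) :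
    coef k (eidx e1 e2 he) (eidx f1 f2 hf) g = 0 := by
  rcases hg with ⟨i, j, hij, rfl⟩ | ⟨i, j, m, hij, hmi, hmj, rfl⟩
  · rw [coef_eta' i j e1 e2 f1 f2 hij.ne he hf]
    split_ifs <;> (repeat' casesm* _ ∧ _) <;> subst_vars <;> simp_all
  · rw [coef_tau' i j m e1 e2 f1 f2 hij.ne hmi hmj he hf]
    split_ifs <;> (repeat' casesm* _ ∧ _) <;> subst_vars <;> simp_all
open ExteriorAlgebra
variable {k : Type} [Field k] {n : ℕ}
noncomputable section
set_option maxHeartbeats 1000000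
set_option maxRecDepth 10000

lemma coef_gen_target {g : Egen k n} (hg : g ∈ resGens k n) (e1 f1 c2 : Fin n)
    (he : e1 ≠ c2) (hf : f1 ≠ c2) (h11 : e1 ≠ f1) :
    coef k (eidx e1 c2 he) (eidx f1 c2 hf) g = 0 := by
  rcases hg with ⟨i, j, hij, rfl⟩ | ⟨i, j, m, hij, hmi, hmj, rfl⟩
  · rw [coef_eta' i j e1 c2 f1 c2 hij.ne he hf]
    split_ifs <;> (repeat' casesm* _ ∧ _) <;> subst_vars <;> simp_all
  · rw [coef_tau' i j m e1 c2 f1 c2 hij.ne hmi hmj he hf]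
    split_ifs <;> (repeat' casesm* _ ∧ _) <;> subst_vars <;> simp_all

lemma coef_gen_path {g : Egen k n} (hg : g ∈ resGens k n) (a b c : Fin n)
    (hab : a ≠ b) (hbc : b ≠ c) (hac : a ≠ c) :
    coef k (eidx a b hab) (eidx b c hbc) g + coef k (eidx a b hab) (eidx a c hac) g = 0 := by
  rcases hg with ⟨i, j, hij, rfl⟩ | ⟨i, j, m, hij, hmi, hmj, rfl⟩
  · rw [coef_eta' i j a b b c hij.ne hab hbc, coef_eta' i j a b a c hij.ne hab hac]
    have h1 : (if i = a ∧ j = b then (1:k) else 0) *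
        ((if j = b ∧ i = c then (1:k) else 0) + (if j = a ∧ i = c then 1 else 0)) = 0 := by
      split_ifs <;> (repeat' casesm* _ ∧ _) <;> subst_vars <;> simp_all
    have h2 : (if j = a ∧ i = b then (1:k) else 0) *
        ((if i = b ∧ j = c then (1:k) else 0) + (if i = a ∧ j = c then 1 else 0)) = 0 := by
      split_ifs <;> (repeat' casesm* _ ∧ _) <;> subst_vars <;> simp_all
    linear_combination h1 - h2
  · rw [coef_tau' i j m a b b c hij.ne hmi hmj hab hbc,
      coef_tau' i j m a b a c hij.ne hmi hmj hab hac]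
    have h1 : ((if m = a ∧ i = b then (1:k) else 0) - (if j = a ∧ i = b then 1 else 0)) *
        (((if m = b ∧ j = c then (1:k) else 0) - (if i = b ∧ j = c then 1 else 0)) +
         ((if m = a ∧ j = c then (1:k) else 0) - (if i = a ∧ j = c then 1 else 0))) = 0 := by
      split_ifs <;> (repeat' casesm* _ ∧ _) <;> subst_vars <;> simp_all
    have h2 : ((if m = a ∧ j = b then (1:k) else 0) - (if i = a ∧ j = b then 1 else 0)) *
        (((if m = b ∧ i = c then (1:k) else 0) - (if j = b ∧ i = c then 1 else 0)) +
         ((if m = a ∧ i = c then (1:k) else 0) - (if j = a ∧ i = c then 1 else 0))) = 0 := by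
      split_ifs <;> (repeat' casesm* _ ∧ _) <;> subst_vars <;> simp_all
    linear_combination h1 - h2

lemma span_coef_disjoint {y : Egen k n} (hy : y ∈ Submodule.span k (resGens k n))
    (e1 e2 f1 f2 : Fin n) (he : e1 ≠ e2) (hf : f1 ≠ f2)
    (h11 : e1 ≠ f1) (h12 : e1 ≠ f2) (h21 : e2 ≠ f1) (h22 : e2 ≠ f2) :
    coef k (eidx e1 e2 he) (eidx f1 f2 hf) y = 0 := by
  have hle : Submodule.span k (resGens k n) ≤
      LinearMap.ker (coef k (eidx e1 e2 he) (eidx f1 f2 hf)) :=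
    Submodule.span_le.mpr fun g hg =>
      LinearMap.mem_ker.mpr (coef_gen_disjoint hg e1 e2 f1 f2 he hf h11 h12 h21 h22)
  exact LinearMap.mem_ker.mp (hle hy)

lemma span_coef_target {y : Egen k n} (hy : y ∈ Submodule.span k (resGens k n))
    (e1 f1 c2 : Fin n) (he : e1 ≠ c2) (hf : f1 ≠ c2) (h11 : e1 ≠ f1) :
    coef k (eidx e1 c2 he) (eidx f1 c2 hf) y = 0 := by
  have hle : Submodule.span k (resGens k n) ≤
      LinearMap.ker (coef k (eidx e1 c2 he) (eidx f1 c2 hf)) :=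
    Submodule.span_le.mpr fun g hg =>
      LinearMap.mem_ker.mpr (coef_gen_target hg e1 f1 c2 he hf h11)
  exact LinearMap.mem_ker.mp (hle hy)

lemma span_coef_path {y : Egen k n} (hy : y ∈ Submodule.span k (resGens k n))
    (a b c : Fin n) (hab : a ≠ b) (hbc : b ≠ c) (hac : a ≠ c) :
    coef k (eidx a b hab) (eidx b c hbc) y + coef k (eidx a b hab) (eidx a c hac) y = 0 := by
  have hle : Submodule.span k (resGens k n) ≤
      LinearMap.ker (coef k (eidx a b hab) (eidx b c hbc) + coef k (eidx a b hab) (eidx a c hac)) :=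
    Submodule.span_le.mpr fun g hg =>
      LinearMap.mem_ker.mpr (by simpa using coef_gen_path hg a b c hab hbc hac)
  simpa using LinearMap.mem_ker.mp (hle hy)

/-- The key chase: if `ι v * ι w` lies in the span of the generators and `v` has two
vertex-disjoint nonzero coefficients, then `w` is proportional to `v`. -/
lemma key_parallel (v w : RIdx n →₀ k) (p q r s : Fin n) (hpq : p ≠ q) (hrs : r ≠ s)
    (hpr : p ≠ r) (hps : p ≠ s) (hqr : q ≠ r) (hqs : q ≠ s)
    (hvP : v (eidx p q hpq) ≠ 0) (hvR : v (eidx r s hrs) ≠ 0)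
    (hmem : ι k v * ι k w ∈ Submodule.span k (resGens k n)) :
    w = (w (eidx p q hpq) / v (eidx p q hpq)) • v := by
  set lam := w (eidx p q hpq) / v (eidx p q hpq) with hlam
  have D : ∀ (e1 e2 f1 f2 : Fin n) (he : e1 ≠ e2) (hf : f1 ≠ f2),
      e1 ≠ f1 → e1 ≠ f2 → e2 ≠ f1 → e2 ≠ f2 →
      v (eidx e1 e2 he) * w (eidx f1 f2 hf) - w (eidx e1 e2 he) * v (eidx f1 f2 hf) = 0 := by
    intro e1 e2 f1 f2 he hf h11 h12 h21 h22
    rw [← coef_ι_mul_ι]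
    exact span_coef_disjoint hmem e1 e2 f1 f2 he hf h11 h12 h21 h22
  have T : ∀ (e1 f1 c2 : Fin n) (he : e1 ≠ c2) (hf : f1 ≠ c2), e1 ≠ f1 →
      v (eidx e1 c2 he) * w (eidx f1 c2 hf) - w (eidx e1 c2 he) * v (eidx f1 c2 hf) = 0 := by
    intro e1 f1 c2 he hf h11
    rw [← coef_ι_mul_ι]
    exact span_coef_target hmem e1 f1 c2 he hf h11
  have PA : ∀ (a b c : Fin n) (hab : a ≠ b) (hbc : b ≠ c) (hac : a ≠ c),
      (v (eidx a b hab) * w (eidx b c hbc) - w (eidx a b hab) * v (eidx b c hbc)) +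
      (v (eidx a b hab) * w (eidx a c hac) - w (eidx a b hab) * v (eidx a c hac)) = 0 := by
    intro a b c hab hbc hac
    rw [← coef_ι_mul_ι, ← coef_ι_mul_ι]
    exact span_coef_path hmem a b c hab hbc hac
  -- basic values
  have stepP : w (eidx p q hpq) = lam * v (eidx p q hpq) := by
    rw [hlam, div_mul_cancel₀ _ hvP]
  -- edges avoiding {p,q}
  have hP : ∀ (f1 f2 : Fin n) (hf : f1 ≠ f2), p ≠ f1 → p ≠ f2 → q ≠ f1 → q ≠ f2 →
      w (eidx f1 f2 hf) = lam * v (eidx f1 f2 hf) := by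
    intro f1 f2 hf h1 h2 h3 h4
    have h := D p q f1 f2 hpq hf h1 h2 h3 h4
    rw [hlam, div_mul_eq_mul_div, eq_div_iff hvP]
    linear_combination h
  have stepR : w (eidx r s hrs) = lam * v (eidx r s hrs) :=
    hP r s hrs hpr hps hqr hqs
  -- edges avoiding {r,s}
  have hR : ∀ (f1 f2 : Fin n) (hf : f1 ≠ f2), r ≠ f1 → r ≠ f2 → s ≠ f1 → s ≠ f2 →
      w (eidx f1 f2 hf) = lam * v (eidx f1 f2 hf) := by
    intro f1 f2 hf h1 h2 h3 h4
    have h := D r s f1 f2 hrs hf h1 h2 h3 h4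
    rw [stepR] at h
    have h5 : v (eidx r s hrs) * (w (eidx f1 f2 hf) - lam * v (eidx f1 f2 hf)) = 0 := by
      linear_combination h
    rcases mul_eq_zero.mp h5 with h6 | h6
    · exact absurd h6 hvR
    · linear_combination h6
  -- edges with target q
  have hTq : ∀ (f1 : Fin n) (hf : f1 ≠ q), p ≠ f1 →
      w (eidx f1 q hf) = lam * v (eidx f1 q hf) := by
    intro f1 hf h1
    have h := T p f1 q hpq hf h1
    rw [hlam, div_mul_eq_mul_div, eq_div_iff hvP]
    linear_combination h
  -- edges with target s
  have hTs : ∀ (f1 : Fin n) (hf : f1 ≠ s), r ≠ f1 →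
      w (eidx f1 s hf) = lam * v (eidx f1 s hf) := by
    intro f1 hf h1
    have h := T r f1 s hrs hf h1
    rw [stepR] at h
    have h5 : v (eidx r s hrs) * (w (eidx f1 s hf) - lam * v (eidx f1 s hf)) = 0 := by
      linear_combination h
    rcases mul_eq_zero.mp h5 with h6 | h6
    · exact absurd h6 hvR
    · linear_combination h6
  -- the four mixed edges
  have hPR : w (eidx p r hpr) = lam * v (eidx p r hpr) := by
    have h1 := PA p s r hps (Ne.symm hrs) hpr
    have h2 := PA p r s hpr hrs hps
    rw [hP s r (Ne.symm hrs) hps hpr hqs hqr] at h1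
    rw [hTs p (hps) (Ne.symm hpr)] at h1 h2
    rw [stepR] at h2
    -- h1 : v_ps * (w_pr - lam v_pr) = 0  (after cancellation)
    have h3 : v (eidx p s hps) * (w (eidx p r hpr) - lam * v (eidx p r hpr)) = 0 := by
      linear_combination h1
    have h4 : v (eidx r s hrs) * (w (eidx p r hpr) - lam * v (eidx p r hpr)) = 0 := by
      linear_combination -h2 - h3
    rcases mul_eq_zero.mp h4 with h6 | h6
    · exact absurd h6 hvR
    · linear_combination h6
  have hQR : w (eidx q r hqr) = lam * v (eidx q r hqr) := by
    have h1 := PA p q r hpq hqr hpr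
    rw [stepP, hPR] at h1
    have h5 : v (eidx p q hpq) * (w (eidx q r hqr) - lam * v (eidx q r hqr)) = 0 := by
      linear_combination h1
    rcases mul_eq_zero.mp h5 with h6 | h6
    · exact absurd h6 hvP
    · linear_combination h6
  have hRP : w (eidx r p (Ne.symm hpr)) = lam * v (eidx r p (Ne.symm hpr)) := by
    have h1 := PA r q p (Ne.symm hqr) (Ne.symm hpq) (Ne.symm hpr)
    have h2 := PA r p q (Ne.symm hpr) hpq (Ne.symm hqr)
    rw [hR q p (Ne.symm hpq) (Ne.symm hqr) (Ne.symm hpr) (Ne.symm hqs) (Ne.symm hps)] at h1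
    rw [hTq r (Ne.symm hqr) hpr] at h1 h2
    rw [stepP] at h2
    have h3 : v (eidx r q (Ne.symm hqr)) *
        (w (eidx r p (Ne.symm hpr)) - lam * v (eidx r p (Ne.symm hpr))) = 0 := by
      linear_combination h1
    have h4 : v (eidx p q hpq) *
        (w (eidx r p (Ne.symm hpr)) - lam * v (eidx r p (Ne.symm hpr))) = 0 := by
      linear_combination -h2 - h3
    rcases mul_eq_zero.mp h4 with h6 | h6
    · exact absurd h6 hvP
    · linear_combination h6
  have hSP : w (eidx s p (Ne.symm hps)) = lam * v (eidx s p (Ne.symm hps)) := by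
    have h1 := PA r s p hrs (Ne.symm hps) (Ne.symm hpr)
    rw [stepR, hRP] at h1
    have h5 : v (eidx r s hrs) * (w (eidx s p (Ne.symm hps)) - lam * v (eidx s p (Ne.symm hps))) = 0 := by
      linear_combination h1
    rcases mul_eq_zero.mp h5 with h6 | h6
    · exact absurd h6 hvR
    · linear_combination h6
  -- now conclude for every edge
  ext F
  rw [Finsupp.smul_apply, smul_eq_mul]
  obtain ⟨⟨f1, f2⟩, hF⟩ := F
  show w (eidx f1 f2 hF) = lam * v (eidx f1 f2 hF)
  by_cases h2q : f2 = q
  · subst h2q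
    by_cases h1p : f1 = p
    · subst h1p; exact stepP
    · exact hTq f1 hF (Ne.symm h1p)
  by_cases h2s : f2 = s
  · subst h2s
    by_cases h1r : f1 = r
    · subst h1r; exact stepR
    · exact hTs f1 hF (Ne.symm h1r)
  by_cases h2p : f2 = p
  · subst h2p
    by_cases h1r : f1 = r
    · subst h1r; exact hRP
    by_cases h1s : f1 = s
    · subst h1s; exact hSP
    · -- f1 ∉ {r,s}, target p : avoids {r,s}
      exact hR f1 f2 hF (Ne.symm h1r) (Ne.symm hpr) (Ne.symm h1s) (Ne.symm hps)
  by_cases h2r : f2 = r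
  · subst h2r
    by_cases h1p : f1 = p
    · subst h1p; exact hPR
    by_cases h1q : f1 = q
    · subst h1q; exact hQR
    · -- avoids {p,q}
      exact hP f1 f2 hF (Ne.symm h1p) hpr (Ne.symm h1q) hqr
  · -- f2 ∉ {p,q,r,s}
    by_cases h1p : f1 = p
    · subst h1p; exact hR f1 f2 hF (Ne.symm hpr) (fun h => h2r h.symm) (Ne.symm hps) (fun h => h2s h.symm)
    by_cases h1q : f1 = q
    · subst h1q; exact hR f1 f2 hF (Ne.symm hqr) (fun h => h2r h.symm) (Ne.symm hqs) (fun h => h2s h.symm)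
    · exact hP f1 f2 hF (Ne.symm h1p) (fun h => h2p h.symm) (Ne.symm h1q) (fun h => h2q h.symm)
open ExteriorAlgebra
variable {k : Type} [Field k] {n : ℕ}
noncomputable section

lemma gen_mem_pow2 {g : Egen k n} (hg : g ∈ resGens k n) :
    g ∈ ⋀[k]^2 (RIdx n →₀ k) := by
  obtain ⟨u, w, rfl⟩ := resGens_eq_mul g hg
  rw [show (⋀[k]^2 (RIdx n →₀ k)) =
    LinearMap.range (ι k (M := RIdx n →₀ k)) * LinearMap.range (ι k) from pow_two _]
  exact Submodule.mul_mem_mul (LinearMap.mem_range_self _ u) (LinearMap.mem_range_self _ w)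

lemma proj2_sandwich {g : Egen k n} (hg : g ∈ resGens k n) (z w : Egen k n) :
    (DirectSum.decompose (fun i => ⋀[k]^i (RIdx n →₀ k)) (z * g * w) 2 : Egen k n) ∈
      Submodule.span k (resGens k n) := by
  refine DirectSum.Decomposition.inductionOn (fun i => ⋀[k]^i (RIdx n →₀ k))
    (motive := fun z => ∀ w : Egen k n,
      (DirectSum.decompose (fun i => ⋀[k]^i (RIdx n →₀ k)) (z * g * w) 2 : Egen k n) ∈
        Submodule.span k (resGens k n)) ?_ ?_ ?_ z w
  · intro w; simp
  · intro i zz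
    refine DirectSum.Decomposition.inductionOn (fun i => ⋀[k]^i (RIdx n →₀ k))
      (motive := fun w => (DirectSum.decompose (fun i => ⋀[k]^i (RIdx n →₀ k))
          ((zz : Egen k n) * g * w) 2 : Egen k n) ∈ Submodule.span k (resGens k n)) ?_ ?_ ?_
    · simp
    · intro j ww
      have hmem : (zz : Egen k n) * g * (ww : Egen k n) ∈ ⋀[k]^(i + 2 + j) (RIdx n →₀ k) :=
        SetLike.mul_mem_graded (SetLike.mul_mem_graded zz.2 (gen_mem_pow2 hg)) ww.2
      by_cases hij : i + 2 + j = 2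
      · have h0 : i = 0 ∧ j = 0 := by omega
        obtain ⟨rfl, rfl⟩ := h0
        rw [DirectSum.decompose_of_mem_same _ (by simpa using hmem)]
        have hz0 : (zz : Egen k n) ∈ (1 : Submodule k (Egen k n)) := by
          simpa [pow_zero] using zz.2
        have hw0 : (ww : Egen k n) ∈ (1 : Submodule k (Egen k n)) := by
          simpa [pow_zero] using ww.2
        obtain ⟨c, hc⟩ := Submodule.mem_one.mp hz0
        obtain ⟨d, hd⟩ := Submodule.mem_one.mp hw0
        rw [← hc, ← hd, ← Algebra.smul_def, smul_mul_assoc, ← Algebra.commutes, ← Algebra.smul_def]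
        exact Submodule.smul_mem _ _ (Submodule.smul_mem _ _ (Submodule.subset_span hg))
      · rw [DirectSum.decompose_of_mem_ne (ℳ := fun i => ⋀[k]^i (RIdx n →₀ k)) hmem hij]
        exact Submodule.zero_mem _
    · intro w1 w2 h1 h2
      rw [mul_add, DirectSum.decompose_add]
      exact Submodule.add_mem _ h1 h2
  · intro z1 z2 h1 h2 w
    rw [add_mul, add_mul, DirectSum.decompose_add]
    exact Submodule.add_mem _ (h1 w) (h2 w)

/-- Auxiliary two-sided ideal used to prove that the degree-two part of `I`
is the span of the generators. -/
def projIdeal (k : Type) [Field k] (n : ℕ) : TwoSidedIdeal (Egen k n) :=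
  TwoSidedIdeal.mk'
    {y | ∀ z w : Egen k n,
      (DirectSum.decompose (fun i => ⋀[k]^i (RIdx n →₀ k)) (z * y * w) 2 : Egen k n) ∈
        Submodule.span k (resGens k n)}
    (fun z w => by simp)
    (fun {a b} ha hb z w => by
      rw [mul_add, add_mul, DirectSum.decompose_add]
      exact Submodule.add_mem _ (ha z w) (hb z w))
    (fun {a} ha z w => by
      have : z * -a * w = -(z * a * w) := by rw [mul_neg, neg_mul]
      rw [this, DirectSum.decompose_neg]
      exact Submodule.neg_mem _ (ha z w))
    (fun {a b} hb z w => by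
      have : z * (a * b) * w = (z * a) * b * w := by rw [mul_assoc z a b]
      rw [this]; exact hb (z * a) w)
    (fun {a b} ha z w => by
      have : z * (a * b) * w = z * a * (b * w) := by rw [← mul_assoc z a b, mul_assoc (z * a) b w]
      rw [this]; exact ha z (b * w))

lemma mem_span_of_I2 {x : Egen k n} (hxI : x ∈ resIdeal k n)
    (hx2 : x ∈ ⋀[k]^2 (RIdx n →₀ k)) : x ∈ Submodule.span k (resGens k n) := by
  have hT : x ∈ projIdeal k n := by
    refine TwoSidedIdeal.mem_span_iff.mp hxI (projIdeal k n) ?_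
    intro g hg
    rw [SetLike.mem_coe, projIdeal, TwoSidedIdeal.mem_mk']
    exact fun z w => proj2_sandwich hg z w
  rw [projIdeal, TwoSidedIdeal.mem_mk'] at hT
  have := hT 1 1
  rwa [one_mul, mul_one, DirectSum.decompose_of_mem_same (ℳ := fun i => ⋀[k]^i (RIdx n →₀ k)) hx2] at this

lemma ctr_mem_range {y : Egen k n} (hy : y ∈ Submodule.span k (resGens k n)) (E : RIdx n) :
    ctr k E y ∈ LinearMap.range (ι k (M := RIdx n →₀ k)) := by
  have hle : Submodule.span k (resGens k n) ≤
      Submodule.comap (ctr k E) (LinearMap.range (ι k (M := RIdx n →₀ k))) := by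
    refine Submodule.span_le.mpr fun g hg => ?_
    obtain ⟨u, w, rfl⟩ := resGens_eq_mul g hg
    simp only [SetLike.mem_coe, Submodule.mem_comap]
    rw [ctr_ι_mul_ι]
    exact Submodule.sub_mem _ (Submodule.smul_mem _ _ (LinearMap.mem_range_self _ _))
      (Submodule.smul_mem _ _ (LinearMap.mem_range_self _ _))
  exact hle hy
open ExteriorAlgebra
variable {k : Type} [Field k] {n : ℕ}
noncomputable section

lemma mul_ι_mem_pow2 (u w : RIdx n →₀ k) :
    ι k u * ι k w ∈ ⋀[k]^2 (RIdx n →₀ k) := by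
  rw [show (⋀[k]^2 (RIdx n →₀ k)) =
    LinearMap.range (ι k (M := RIdx n →₀ k)) * LinearMap.range (ι k) from pow_two _]
  exact Submodule.mul_mem_mul (LinearMap.mem_range_self _ u) (LinearMap.mem_range_self _ w)

lemma resπ_eq_zero_iff (y : Egen k n) : resπ k n y = 0 ↔ y ∈ resIdeal k n := by
  have h1 : resπ k n y = (resIdeal k n).ringCon.mk' y := rfl
  have h2 : (0 : resA k n) = (resIdeal k n).ringCon.mk' 0 := (map_zero _).symm
  rw [h1, h2]
  have h3 : ∀ z : Egen k n, (resIdeal k n).ringCon.mk' z = (z : (resIdeal k n).ringCon.Quotient) :=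
    fun _ => rfl
  rw [h3, h3, RingCon.eq]
  exact Iff.rfl

/-- Main vanishing: an element of the span of the generators killed by `ι v`
(as given in product form) must vanish. -/
lemma key_zero (v w : RIdx n →₀ k) (p q r s : Fin n) (hpq : p ≠ q) (hrs : r ≠ s)
    (hpr : p ≠ r) (hps : p ≠ s) (hqr : q ≠ r) (hqs : q ≠ s)
    (hvP : v (eidx p q hpq) ≠ 0) (hvR : v (eidx r s hrs) ≠ 0)
    (hmem : ι k v * ι k w ∈ Submodule.span k (resGens k n)) :
    ι k v * ι k w = 0 := by
  rw [key_parallel v w p q r s hpq hrs hpr hps hqr hqs hvP hvR hmem,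
    map_smul, mul_smul_comm, ι_sq_zero, smul_zero]


end
end
end
end CaseOneAux

/-- **Case 1.** For `n ≥ 4`, if `a = Σ a_{p,q} e_{p,q} ∈ E¹` has `a_{p,q} ≠ 0` and
`a_{r,s} ≠ 0` for some ordered pairs with `{p,q} ∩ {r,s} = ∅`, then `ψ_a : I² → E³` is
injective; consequently `a ∉ R¹`. -/
theorem case1_psi_injective
    (k : Type) [Field k] [IsAlgClosed k] [CharZero k] (n : ℕ) (hn : 4 ≤ n)
    (v : RIdx n →₀ k) (x y : RIdx n)
    (hdisj : Disjoint ({x.1.1, x.1.2} : Finset (Fin n)) ({y.1.1, y.1.2} : Finset (Fin n)))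
    (hx : v x ≠ 0) (hy : v y ≠ 0) :
    Function.Injective (resPsi k n (ExteriorAlgebra.ι k v)) ∧
    resπ k n (ExteriorAlgebra.ι k v) ∉ resR1 k n := by

  obtain ⟨⟨p, q⟩, hpq⟩ := x
  obtain ⟨⟨r, s⟩, hrs⟩ := y
  simp only at hdisj hx hy hpq hrs
  have hd := Finset.disjoint_left.mp hdisj
  have hpr : p ≠ r := fun h => hd (a := p) (Finset.mem_insert_self _ _) (by simp [h])
  have hps : p ≠ s := fun h => hd (a := p) (Finset.mem_insert_self _ _) (by simp [h])
  have hqr : q ≠ r := fun h => hd (a := q) (by simp) (by simp [h])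
  have hqs : q ≠ s := fun h => hd (a := q) (by simp) (by simp [h])
  have hvP : v (eidx p q hpq) ≠ 0 := hx
  have hvR : v (eidx r s hrs) ≠ 0 := hy
  -- the main vanishing statement
  have main : ∀ z : Egen k n, z ∈ Submodule.span k (resGens k n) →
      ExteriorAlgebra.ι k v * z = 0 → z = 0 := by
    intro z hspan h0
    have hc := congrArg (ctr k (eidx p q hpq)) h0
    rw [map_zero, ctr_ι_mul (eidx p q hpq) v z] at hc
    obtain ⟨u0, hu0⟩ := ctr_mem_range hspan (eidx p q hpq)
    have hz2 : z = ExteriorAlgebra.ι k v * ExteriorAlgebra.ι k ((v (eidx p q hpq))⁻¹ • u0) := by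
      rw [map_smul, mul_smul_comm, hu0]
      rw [sub_eq_zero] at hc
      rw [← hc, smul_smul, inv_mul_cancel₀ hvP, one_smul]
    have hmem2 : ExteriorAlgebra.ι k v * ExteriorAlgebra.ι k ((v (eidx p q hpq))⁻¹ • u0) ∈
        Submodule.span k (resGens k n) := hz2 ▸ hspan
    rw [hz2]
    exact key_zero v _ p q r s hpq hrs hpr hps hqr hqs hvP hvR hmem2
  constructor
  · -- injectivity of ψ
    intro z1 z2 hz12
    have h0 : ExteriorAlgebra.ι k v * ((z1 : Egen k n) - (z2 : Egen k n)) = 0 := by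
      have h1 : ExteriorAlgebra.ι k v * (z1 : Egen k n) = ExteriorAlgebra.ι k v * (z2 : Egen k n) := hz12
      rw [mul_sub, h1, sub_self]
    have hspan : (z1 : Egen k n) - (z2 : Egen k n) ∈ Submodule.span k (resGens k n) := by
      have hm : (z1 : Egen k n) - (z2 : Egen k n) ∈ resI2 k n :=
        Submodule.sub_mem _ z1.2 z2.2
      exact mem_span_of_I2 hm.1 hm.2
    have := main _ hspan h0
    exact Subtype.ext (sub_eq_zero.mp this)
  · -- not in the resonance variety
    rintro ⟨-, xq, hxq1, hmul0, hnot⟩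
    obtain ⟨ξ, hξ, rfl⟩ := hxq1
    have hξι : ξ ∈ LinearMap.range (ExteriorAlgebra.ι k (M := RIdx n →₀ k)) := by
      rw [show (⋀[k]^1 (RIdx n →₀ k)) =
        LinearMap.range (ExteriorAlgebra.ι k (M := RIdx n →₀ k)) from pow_one _] at hξ
      exact hξ
    obtain ⟨w, rfl⟩ := hξι
    have hπ0 : resπ k n (ExteriorAlgebra.ι k v * ExteriorAlgebra.ι k w) = 0 := by
      rw [map_mul]; exact hmul0
    have hImem : ExteriorAlgebra.ι k v * ExteriorAlgebra.ι k w ∈ resIdeal k n := (resπ_eq_zero_iff _).mp hπ0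
    have hspan := mem_span_of_I2 hImem (mul_ι_mem_pow2 v w)
    have hw := key_parallel v w p q r s hpq hrs hpr hps hqr hqs hvP hvR hspan
    set lam := w (eidx p q hpq) / v (eidx p q hpq) with hlam
    apply hnot
    refine ⟨algebraMap k (resA k n) lam, ?_, ?_⟩
    · refine ⟨algebraMap k (Egen k n) lam, ?_, (resπ k n).commutes lam⟩
      rw [show (⋀[k]^0 (RIdx n →₀ k)) = (1 : Submodule k (Egen k n)) from pow_zero _]
      exact Submodule.algebraMap_mem lam
    · have h1 : (resπ k n).toLinearMap (ExteriorAlgebra.ι k w) = resπ k n (ExteriorAlgebra.ι k w) := rfl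
      rw [LinearMap.mulLeft_apply, h1, hw, map_smul, map_smul, Algebra.smul_def,
        ← Algebra.commutes]
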